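/- In the two-shop Partition reduction with discounts d = T/2 at thresholds T/2 (instead of discount 1): the minimum achievable cost is 0 if and only if the Partition instance (A, ω) with total weight T admits a subset summing to T/2; otherwise the minimum cost is positive. -/
import Mathlib

lemma stmt18_split {α : Type*} [DecidableEq α] (A : Finset α) (ω : α → ℕ)
    (f : α → Bool) :
    (∑ a ∈ A.filter (fun a => f a = true), ω a) +
      (∑ a ∈ A.filter (fun a => f a = false), ω a) = ∑ a ∈ A, ω a := by
  have : A.filter (fun a => f a = false) = A.filter (fun a => ¬ (f a = true)) := by
    apply Finset.filter_congr
    intro a _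
    simp
  rw [this, Finset.sum_filter_add_sum_filter_not]

/-- Two-shop Partition reduction with discounts `T/2` at thresholds `T/2`:
the cost is always nonnegative, and the minimum achievable cost is `0` iff
the Partition instance has a subset of weight `T/2` (otherwise every plan
has positive cost). -/
theorem stmt_18 {α : Type*} [DecidableEq α]
    (A : Finset α) (ω : α → ℕ) (T : ℕ) (hT : T = ∑ a ∈ A, ω a) (heven : Even T) :
    let cost : (α → Bool) → ℤ := fun f =>
      (T : ℤ) -
        ((if T / 2 ≤ ∑ a ∈ A.filter (fun a => f a = true), ω a
            then ((T / 2 : ℕ) : ℤ) else 0) +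
         (if T / 2 ≤ ∑ a ∈ A.filter (fun a => f a = false), ω a
            then ((T / 2 : ℕ) : ℤ) else 0))
    (∀ f, 0 ≤ cost f) ∧
      ((∃ A' ⊆ A, ∑ a ∈ A', ω a = T / 2) ↔ ∃ f, cost f = 0) ∧
      (¬(∃ A' ⊆ A, ∑ a ∈ A', ω a = T / 2) → ∀ f, 0 < cost f) := by
  intro cost
  have hhalf : T / 2 + T / 2 = T := by
    obtain ⟨k, hk⟩ := heven
    omega
  have key : ∀ f, 0 ≤ cost f ∧
      (cost f = 0 ↔ (∑ a ∈ A.filter (fun a => f a = true), ω a = T / 2)) := by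
    intro f
    have hsplit := stmt18_split A ω f
    rw [← hT] at hsplit
    simp only [cost]
    by_cases h1 : T / 2 ≤ ∑ a ∈ A.filter (fun a => f a = true), ω a <;>
      by_cases h2 : T / 2 ≤ ∑ a ∈ A.filter (fun a => f a = false), ω a <;>
      simp [h1, h2] <;> omega
  refine ⟨fun f => (key f).1, ⟨?_, ?_⟩, ?_⟩
  · rintro ⟨A', hA', hsum⟩
    refine ⟨fun a => decide (a ∈ A'), ((key _).2).mpr ?_⟩
    rw [← hsum]
    apply Finset.sum_congr
    · ext a
      simp only [Finset.mem_filter, decide_eq_true_eq]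
      exact ⟨fun h => h.2, fun h => ⟨hA' h, h⟩⟩
    · intros; rfl
  · rintro ⟨f, hf⟩
    exact ⟨A.filter (fun a => f a = true), Finset.filter_subset _ _, ((key f).2).mp hf⟩
  · intro hno f
    rcases lt_or_eq_of_le ((key f).1) with h | h
    · exact h
    · exact absurd ⟨A.filter (fun a => f a = true), Finset.filter_subset _ _,
        ((key f).2).mp h.symm⟩ hno
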